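/- Let Q be a symmetric real n×n matrix, i ≠ j indices, S a semi-symmetry set for (i,j), and Q_mod the modified (n+1)×(n+1) matrix, where z satisfies z ≥ Σ_{k∈S} |Q[i,k]|. Then for every binary vector x ∈ {0,1}^n that is valid, i.e. x_i = 0 or x_j = 0, the minimum over the ancilla value a ∈ {0,1} of H_{Q_mod}((x,a)) equals H_Q(x); that is, the modification does not change the energy of valid solutions under the best choice of ancilla value. -/

import Mathlib

open Finset

/-- Energy of a binary vector `x` w.r.t. a QUBO matrix `Q`:
`H_Q(x) = Σ_k Q[k,k]·x_k + Σ_{k<l} Q[k,l]·x_k·x_l`. -/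
def energy {m : ℕ} (Q : Fin m → Fin m → ℝ) (x : Fin m → ℝ) : ℝ :=
  ∑ k, Q k k * x k + ∑ k, ∑ l, if k < l then Q k l * x k * x l else 0

/-- `x` is a binary (0/1-valued) vector. -/
def IsBinary {m : ℕ} (x : Fin m → ℝ) : Prop := ∀ k, x k = 0 ∨ x k = 1

/-- Entries of the new (n+1)-st row/column of the modified matrix. -/
def modCol {n : ℕ} (Q : Fin n → Fin n → ℝ) (i j : Fin n) (S : Finset (Fin n)) (z : ℝ)
    (k : Fin n) : ℝ :=
  if k = i ∨ k = j then -2 * z else if k ∈ S then Q i k else 0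

/-- Entries of the modified matrix among the original n indices. -/
def modCore {n : ℕ} (Q : Fin n → Fin n → ℝ) (i j : Fin n) (S : Finset (Fin n)) (z : ℝ)
    (k l : Fin n) : ℝ :=
  if k = i ∧ l = i then Q i i + z
  else if k = j ∧ l = j then Q j j + z
  else if (k = i ∧ l = j) ∨ (k = j ∧ l = i) then Q i j + 2 * z
  else if (k = i ∨ k = j) ∧ l ∈ S then 0
  else if (l = i ∨ l = j) ∧ k ∈ S then 0
  else Q k l

/-- The modified (n+1)×(n+1) QUBO matrix `Q_mod` obtained from `Q` by factoring out the
semi-symmetry `S` of the conflicting pair `(i,j)` into the ancilla qubit (index `n+1`). -/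
def modQ {n : ℕ} (Q : Fin n → Fin n → ℝ) (i j : Fin n) (S : Finset (Fin n)) (z : ℝ) :
    Fin (n + 1) → Fin (n + 1) → ℝ := fun a b =>
  if ha : a = Fin.last n then
    if hb : b = Fin.last n then z
    else modCol Q i j S z (b.castPred hb)
  else if hb : b = Fin.last n then modCol Q i j S z (a.castPred ha)
  else modCore Q i j S z (a.castPred ha) (b.castPred hb)

lemma half_sum {m : ℕ} (g : Fin m → Fin m → ℝ) (hg : ∀ k l, g k l = g l k) :
    ∑ k, ∑ l, (if k < l then g k l else 0)
      = ((∑ k, ∑ l, g k l) - ∑ k, g k k) / 2 := by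
  have h2 : (∑ k, ∑ l, g k l) =
      (∑ k, ∑ l, (if k < l then g k l else 0))
      + ((∑ k, ∑ l, (if l < k then g k l else 0))
      + (∑ k, ∑ l, (if k = l then g k l else 0))) := by
    calc (∑ k, ∑ l, g k l)
        = ∑ k, ∑ l, ((if k < l then g k l else 0)
            + ((if l < k then g k l else 0) + (if k = l then g k l else 0))) := by
          refine Finset.sum_congr rfl fun k _ => Finset.sum_congr rfl fun l _ => ?_
          rcases lt_trichotomy k l with h | h | h
          · simp [h, h.ne, h.asymm]
          · simp [h]
          · simp [h, h.ne', h.asymm]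
      _ = _ := by simp only [Finset.sum_add_distrib]
  have h3 : (∑ k, ∑ l, (if l < k then g k l else 0))
      = ∑ k, ∑ l, (if k < l then g k l else 0) := by
    rw [Finset.sum_comm]
    exact Finset.sum_congr rfl fun k _ => Finset.sum_congr rfl fun l _ => by
      by_cases h : k < l <;> simp [h, hg]
  have h4 : (∑ k, ∑ l, (if k = l then g k l else 0)) = ∑ k, g k k :=
    Finset.sum_congr rfl fun k _ => by simp
  rw [h3, h4] at h2
  linarith

lemma modQ_cc {n : ℕ} (Q : Fin n → Fin n → ℝ) (i j : Fin n) (S : Finset (Fin n)) (z : ℝ)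
    (k l : Fin n) :
    modQ Q i j S z k.castSucc l.castSucc = modCore Q i j S z k l := by
  simp [modQ, (Fin.castSucc_lt_last k).ne, (Fin.castSucc_lt_last l).ne]

lemma modQ_cl {n : ℕ} (Q : Fin n → Fin n → ℝ) (i j : Fin n) (S : Finset (Fin n)) (z : ℝ)
    (k : Fin n) :
    modQ Q i j S z k.castSucc (Fin.last n) = modCol Q i j S z k := by
  simp [modQ, (Fin.castSucc_lt_last k).ne]

lemma modQ_ll {n : ℕ} (Q : Fin n → Fin n → ℝ) (i j : Fin n) (S : Finset (Fin n)) (z : ℝ) :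
    modQ Q i j S z (Fin.last n) (Fin.last n) = z := by simp [modQ]

lemma energy_snoc {n : ℕ} (Q : Fin n → Fin n → ℝ) (i j : Fin n) (S : Finset (Fin n)) (z : ℝ)
    (x : Fin n → ℝ) (a : ℝ) :
    energy (modQ Q i j S z) (Fin.snoc x a) =
      (∑ k, modCore Q i j S z k k * x k) + z * a
      + ((∑ k, ∑ l, if k < l then modCore Q i j S z k l * x k * x l else 0)
      + (∑ k, modCol Q i j S z k * x k) * a) := by
  unfold energy
  have hnl : ∀ l : Fin n, ¬ (Fin.last n < Fin.castSucc l) :=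
    fun l => not_lt.mpr (Fin.castSucc_lt_last l).le
  simp only [Fin.sum_univ_castSucc, Fin.snoc_castSucc, Fin.snoc_last,
    modQ_cc, modQ_cl, modQ_ll, Fin.castSucc_lt_castSucc_iff,
    Fin.castSucc_lt_last, if_true, hnl, if_false, lt_irrefl,
    Finset.sum_const_zero, add_zero]
  rw [Finset.sum_mul]
  have h : ∀ k : Fin n, modCol Q i j S z k * x k * a = modCol Q i j S z k * (x k * a) := by
    intro k; ring
  simp only [h]
  ring_nf
  rw [Finset.sum_add_distrib]
  have e : ∀ k, a * x k * modCol Q i j S z k = a * modCol Q i j S z k * x k := fun k => by ring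
  simp only [e]
  ring

lemma core_key {n : ℕ} (Q : Fin n → Fin n → ℝ) (i j : Fin n) (S : Finset (Fin n)) (z : ℝ)
    (hQsymm : ∀ k l, Q k l = Q l k) (hij : i ≠ j)
    (hiS : i ∉ S) (hjS : j ∉ S) (hsemi : ∀ k ∈ S, Q i k = Q j k) (x : Fin n → ℝ)
    (k l : Fin n) :
    modCore Q i j S z k l * x k * x l =
      Q k l * x k * x l
      + z * (if k = i then x k else 0) * (if l = i then x l else 0)
      + z * (if k = j then x k else 0) * (if l = j then x l else 0)
      + 2 * z * (if k = i then x k else 0) * (if l = j then x l else 0)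
      + 2 * z * (if k = j then x k else 0) * (if l = i then x l else 0)
      - ((if k = i then x k else 0) + (if k = j then x k else 0))
          * (if l ∈ S then Q i l * x l else 0)
      - (if k ∈ S then Q i k * x k else 0)
          * ((if l = i then x l else 0) + (if l = j then x l else 0)) := by
  have hQji : Q j i = Q i j := hQsymm j i
  have hSk : ∀ k ∈ S, Q k i = Q i k := fun k _ => hQsymm k i
  have hSkj : ∀ k ∈ S, Q k j = Q i k := fun k hk => (hQsymm k j).trans (hsemi k hk).symm
  have hSjk : ∀ k ∈ S, Q j k = Q i k := fun k hk => (hsemi k hk).symm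
  by_cases hki : k = i <;> by_cases hkj : k = j <;> by_cases hli : l = i <;>
    by_cases hlj : l = j <;> by_cases hkS : k ∈ S <;> by_cases hlS : l ∈ S <;>
      simp_all [modCore] <;> ring

lemma core_diag {n : ℕ} (Q : Fin n → Fin n → ℝ) (i j : Fin n) (S : Finset (Fin n)) (z : ℝ)
    (hij : i ≠ j) (hiS : i ∉ S) (hjS : j ∉ S) (x : Fin n → ℝ) (k : Fin n) :
    modCore Q i j S z k k * x k =
      Q k k * x k + z * (if k = i then x k else 0) + z * (if k = j then x k else 0) := by
  by_cases hki : k = i <;> by_cases hkj : k = j <;> by_cases hkS : k ∈ S <;>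
    simp_all [modCore] <;> ring

lemma col_key {n : ℕ} (Q : Fin n → Fin n → ℝ) (i j : Fin n) (S : Finset (Fin n)) (z : ℝ)
    (hij : i ≠ j) (hiS : i ∉ S) (hjS : j ∉ S) (x : Fin n → ℝ) (k : Fin n) :
    modCol Q i j S z k * x k =
      -(2*z) * (if k = i then x k else 0) + -(2*z) * (if k = j then x k else 0)
      + (if k ∈ S then Q i k * x k else 0) := by
  by_cases hki : k = i <;> by_cases hkj : k = j <;> by_cases hkS : k ∈ S <;>
    simp_all [modCol] <;> ring

/-- with `z ≥ Σ_{k∈S} |Q[i,k]|`, for every valid binary `x`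
(`x i = 0` or `x j = 0`), the minimum over the ancilla value of the modified
energy equals the original energy. -/
theorem stmt8
    {n : ℕ} (Q : Fin n → Fin n → ℝ) (i j : Fin n) (S : Finset (Fin n)) (z : ℝ)
    (hQsymm : ∀ k l, Q k l = Q l k) (hij : i ≠ j)
    (hiS : i ∉ S) (hjS : j ∉ S) (hsemi : ∀ k ∈ S, Q i k = Q j k)
    (x : Fin n → ℝ) (hx : IsBinary x)
    (hz : (∑ k ∈ S, |Q i k|) ≤ z)
    (hvalid : x i = 0 ∨ x j = 0) :
    min (energy (modQ Q i j S z) (Fin.snoc x 0))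
        (energy (modQ Q i j S z) (Fin.snoc x 1)) = energy Q x := by
  set T : ℝ := ∑ k ∈ S, Q i k * x k with hTdef
  have hxi2 : x i * x i = x i := by rcases hx i with h | h <;> rw [h] <;> ring
  have hxj2 : x j * x j = x j := by rcases hx j with h | h <;> rw [h] <;> ring
  have hP : x i * x j = 0 := by rcases hvalid with h | h <;> rw [h] <;> ring
  have habsT : |T| ≤ z := by
    calc |T| ≤ ∑ k ∈ S, |Q i k * x k| := Finset.abs_sum_le_sum_abs _ _
      _ ≤ ∑ k ∈ S, |Q i k| := by
          refine Finset.sum_le_sum fun k _ => ?_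
          rw [abs_mul]
          have hk : |x k| ≤ 1 := by rcases hx k with h | h <;> simp [h]
          exact mul_le_of_le_one_right (abs_nonneg _) hk
      _ ≤ z := hz
  have hTub : T ≤ z := (abs_le.mp habsT).2
  have hTlb : -z ≤ T := (abs_le.mp habsT).1
  have key := core_key Q i j S z hQsymm hij hiS hjS hsemi x
  have hsi : ∑ k, (if k = i then x k else 0) = x i := by simp
  have hsj : ∑ k, (if k = j then x k else 0) = x j := by simp
  have hsS : ∑ k, (if k ∈ S then Q i k * x k else 0) = T := by
    rw [hTdef]; simp [Finset.sum_ite_mem]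
  -- the diagonal sum
  have hD : ∑ k, modCore Q i j S z k k * x k
      = (∑ k, Q k k * x k) + z * x i + z * x j := by
    simp only [core_diag Q i j S z hij hiS hjS x]
    rw [Finset.sum_add_distrib, Finset.sum_add_distrib, ← Finset.mul_sum, ← Finset.mul_sum,
      hsi, hsj]
  -- the column sum
  have hL : ∑ k, modCol Q i j S z k * x k
      = -(2*z) * x i + -(2*z) * x j + T := by
    simp only [col_key Q i j S z hij hiS hjS x]
    rw [Finset.sum_add_distrib, Finset.sum_add_distrib, ← Finset.mul_sum, ← Finset.mul_sum,
      hsi, hsj, hsS]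
  -- the full double sum
  have hF : ∑ k, ∑ l, modCore Q i j S z k l * x k * x l
      = (∑ k, ∑ l, Q k l * x k * x l)
        + z * x i * x i + z * x j * x j + 2 * z * x i * x j + 2 * z * x j * x i
        - (x i + x j) * T - T * (x i + x j) := by
    have hrow : ∀ k : Fin n, ∑ l, modCore Q i j S z k l * x k * x l
        = (∑ l, Q k l * x k * x l)
          + z * (if k = i then x k else 0) * x i
          + z * (if k = j then x k else 0) * x j
          + 2 * z * (if k = i then x k else 0) * x j
          + 2 * z * (if k = j then x k else 0) * x i
          - ((if k = i then x k else 0) + (if k = j then x k else 0)) * T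
          - (if k ∈ S then Q i k * x k else 0) * (x i + x j) := by
      intro k
      calc ∑ l, modCore Q i j S z k l * x k * x l
          = ∑ l, (Q k l * x k * x l
            + z * (if k = i then x k else 0) * (if l = i then x l else 0)
            + z * (if k = j then x k else 0) * (if l = j then x l else 0)
            + 2 * z * (if k = i then x k else 0) * (if l = j then x l else 0)
            + 2 * z * (if k = j then x k else 0) * (if l = i then x l else 0)
            - ((if k = i then x k else 0) + (if k = j then x k else 0))
                * (if l ∈ S then Q i l * x l else 0)
            - (if k ∈ S then Q i k * x k else 0)
                * ((if l = i then x l else 0) + (if l = j then x l else 0)))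
            := Finset.sum_congr rfl fun l _ => key k l
        _ = _ := by
            simp only [Finset.sum_add_distrib, Finset.sum_sub_distrib, ← Finset.mul_sum,
              hsi, hsj, hsS]
    calc ∑ k, ∑ l, modCore Q i j S z k l * x k * x l
        = ∑ k, ((∑ l, Q k l * x k * x l)
          + z * (if k = i then x k else 0) * x i
          + z * (if k = j then x k else 0) * x j
          + 2 * z * (if k = i then x k else 0) * x j
          + 2 * z * (if k = j then x k else 0) * x i
          - ((if k = i then x k else 0) + (if k = j then x k else 0)) * T
          - (if k ∈ S then Q i k * x k else 0) * (x i + x j)) :=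
          Finset.sum_congr rfl fun k _ => hrow k
      _ = _ := by
          simp only [Finset.sum_add_distrib, Finset.sum_sub_distrib, ← Finset.sum_mul,
            ← Finset.mul_sum, hsi, hsj, hsS]
  -- symmetry, half sums
  have hsymm' : ∀ k l, modCore Q i j S z k l * x k * x l
      = modCore Q i j S z l k * x l * x k := fun k l => by
    rw [key k l, key l k, hQsymm k l]; ring
  have hCm : ∑ k, ∑ l, (if k < l then modCore Q i j S z k l * x k * x l else 0)
      = ((∑ k, ∑ l, modCore Q i j S z k l * x k * x l)
          - ∑ k, modCore Q i j S z k k * x k * x k) / 2 :=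
    half_sum (fun k l => modCore Q i j S z k l * x k * x l) hsymm'
  have hCQ : ∑ k, ∑ l, (if k < l then Q k l * x k * x l else 0)
      = ((∑ k, ∑ l, Q k l * x k * x l) - ∑ k, Q k k * x k * x k) / 2 :=
    half_sum (fun k l => Q k l * x k * x l) (fun k l => by
      show Q k l * x k * x l = Q l k * x l * x k
      rw [hQsymm k l]; ring)
  have hdm : ∑ k, modCore Q i j S z k k * x k * x k = ∑ k, modCore Q i j S z k k * x k :=
    Finset.sum_congr rfl fun k _ => by rcases hx k with h | h <;> rw [h] <;> ring
  have hdq : ∑ k, Q k k * x k * x k = ∑ k, Q k k * x k :=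
    Finset.sum_congr rfl fun k _ => by rcases hx k with h | h <;> rw [h] <;> ring
  -- square/product eliminators at the monomial level
  have hzxi : z * x i * x i = z * x i := by rw [mul_assoc, hxi2]
  have hzxj : z * x j * x j = z * x j := by rw [mul_assoc, hxj2]
  have hzij : z * x i * x j = 0 := by rw [mul_assoc, hP, mul_zero]
  -- the two energies
  have hE0 : energy (modQ Q i j S z) (Fin.snoc x 0)
      = energy Q x + (x i + x j) * (z - T) := by
    rw [energy_snoc]
    unfold energy
    linarith [hCm, hCQ, hdm, hdq, hF, hD, hL, hzxi, hzxj, hzij]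
  have hE1 : energy (modQ Q i j S z) (Fin.snoc x 1)
      = energy Q x + (1 - (x i + x j)) * (z + T) := by
    rw [energy_snoc]
    unfold energy
    linarith [hCm, hCQ, hdm, hdq, hF, hD, hL, hzxi, hzxj, hzij]
  have hs : x i + x j = 0 ∨ x i + x j = 1 := by
    rcases hvalid with h | h
    · rcases hx j with h' | h' <;> rw [h, h'] <;> norm_num
    · rcases hx i with h' | h' <;> rw [h, h'] <;> norm_num
  rcases hs with hs | hs
  · have hle : energy (modQ Q i j S z) (Fin.snoc x 0)
        ≤ energy (modQ Q i j S z) (Fin.snoc x 1) := by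
      rw [hE0, hE1, hs]; nlinarith [hTlb]
    rw [min_eq_left hle, hE0, hs]; ring
  · have hle : energy (modQ Q i j S z) (Fin.snoc x 1)
        ≤ energy (modQ Q i j S z) (Fin.snoc x 0) := by
      rw [hE0, hE1, hs]; nlinarith [hTub]
    rw [min_eq_right hle, hE1, hs]; ring
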